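/- arXiv:1910.08460 — 2 statements merged into one kernel-verified Lean document; each statement's English description precedes it below -/
import Mathlib

section
/- Suppose δ_j < 1/2. Then the (j+1)-th and (j−1)-th eigenvalues of Σ + E satisfy λ̂_{j+1} − λ_{j+1} ≤ δ_j (λ_j − λ_{j+1}) and λ̂_{j−1} − λ_{j−1} ≥ −δ_j (λ_{j−1} − λ_j). -/
open Matrix Finset

noncomputable def opNorm {d : ℕ} (A : Matrix (Fin d) (Fin d) ℝ) : ℝ :=
  ‖Matrix.toEuclideanCLM (𝕜 := ℝ) A‖

noncomputable def hsNorm {d : ℕ} (A : Matrix (Fin d) (Fin d) ℝ) : ℝ :=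
  Real.sqrt (Matrix.trace (Aᵀ * A))

noncomputable def proj {d : ℕ} (u : Fin d → ℝ) : Matrix (Fin d) (Fin d) ℝ :=
  Matrix.vecMulVec u u

/-- `|R_j|^{1/2}` : square root of the absolute value of the reduced resolvent. -/
noncomputable def sqrtAbsRes {d : ℕ} (lam : Fin d → ℝ) (u : Fin d → Fin d → ℝ)
    (j : Fin d) : Matrix (Fin d) (Fin d) ℝ :=
  ∑ k ∈ Finset.univ.filter (fun k => k ≠ j), (Real.sqrt |lam k - lam j|)⁻¹ • proj (u k)

/-- `|R_j|^{-1/2}`. -/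
noncomputable def invSqrtAbsRes {d : ℕ} (lam : Fin d → ℝ) (u : Fin d → Fin d → ℝ)
    (j : Fin d) : Matrix (Fin d) (Fin d) ℝ :=
  ∑ k ∈ Finset.univ.filter (fun k => k ≠ j), Real.sqrt |lam k - lam j| • proj (u k)

/-- the reduced resolvent `R_j`. -/
noncomputable def res {d : ℕ} (lam : Fin d → ℝ) (u : Fin d → Fin d → ℝ)
    (j : Fin d) : Matrix (Fin d) (Fin d) ℝ :=
  ∑ k ∈ Finset.univ.filter (fun k => k ≠ j), (lam k - lam j)⁻¹ • proj (u k)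

/-- `δ_j`. -/
noncomputable def delta {d : ℕ} (lam : Fin d → ℝ) (u : Fin d → Fin d → ℝ) (j : Fin d)
    (gj : ℝ) (E : Matrix (Fin d) (Fin d) ℝ) : ℝ :=
  opNorm ((sqrtAbsRes lam u j + (Real.sqrt gj)⁻¹ • proj (u j)) * E *
    (sqrtAbsRes lam u j + (Real.sqrt gj)⁻¹ • proj (u j)))

/-- `δ'_j`. -/
noncomputable def delta' {d : ℕ} (lam : Fin d → ℝ) (u : Fin d → Fin d → ℝ) (j : Fin d)
    (gj : ℝ) (E : Matrix (Fin d) (Fin d) ℝ) : ℝ :=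
  max (opNorm (sqrtAbsRes lam u j * E * sqrtAbsRes lam u j))
    (max ((Real.sqrt gj)⁻¹ * hsNorm (sqrtAbsRes lam u j * E * proj (u j)))
      (gj⁻¹ * hsNorm (proj (u j) * E * proj (u j))))

section aux
variable {d : ℕ}

lemma aux_dot_sum (w : Fin d → ℝ) {ι : Type*} (S : Finset ι) (f : ι → Fin d → ℝ) :
    w ⬝ᵥ (∑ k ∈ S, f k) = ∑ k ∈ S, w ⬝ᵥ f k := by
  simp only [dotProduct, Finset.sum_apply, Finset.mul_sum]
  rw [Finset.sum_comm]

lemma aux_sum_dot (w : Fin d → ℝ) {ι : Type*} (S : Finset ι) (f : ι → Fin d → ℝ) :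
    (∑ k ∈ S, f k) ⬝ᵥ w = ∑ k ∈ S, f k ⬝ᵥ w := by
  simp only [dotProduct, Finset.sum_apply, Finset.sum_mul]
  rw [Finset.sum_comm]

lemma aux_dot_single (v : Fin d → Fin d → ℝ)
    (hON : ∀ k l, v k ⬝ᵥ v l = if k = l then (1 : ℝ) else 0)
    (S : Finset (Fin d)) (c : Fin d → ℝ) (l : Fin d) :
    v l ⬝ᵥ (∑ k ∈ S, c k • v k) = if l ∈ S then c l else 0 := by
  rw [aux_dot_sum]
  have : ∀ k ∈ S, v l ⬝ᵥ (c k • v k) = if k = l then c l else 0 := by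
    intro k _
    rw [dotProduct_smul, hON l k, smul_eq_mul]
    by_cases h : k = l <;> simp [h, eq_comm (a := l) (b := k)]
  rw [Finset.sum_congr rfl this, Finset.sum_ite_eq' S l (fun _ => c l)]

lemma aux_normsq (v : Fin d → Fin d → ℝ)
    (hON : ∀ k l, v k ⬝ᵥ v l = if k = l then (1 : ℝ) else 0)
    (S : Finset (Fin d)) (c : Fin d → ℝ) :
    (∑ k ∈ S, c k • v k) ⬝ᵥ (∑ k ∈ S, c k • v k) = ∑ k ∈ S, c k ^ 2 := by
  rw [aux_sum_dot]
  refine Finset.sum_congr rfl fun k hk => ?_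
  rw [smul_dotProduct, aux_dot_single v hON, if_pos hk, smul_eq_mul, sq]

lemma aux_proj_mulVec (v x : Fin d → ℝ) : proj v *ᵥ x = (v ⬝ᵥ x) • v := by
  ext i
  simp only [proj, mulVec, dotProduct, vecMulVec_apply, Pi.smul_apply, smul_eq_mul,
    Finset.sum_mul]
  exact Finset.sum_congr rfl fun k _ => by ring

lemma aux_sum_mulVec {ι : Type*} (S : Finset ι) (M : ι → Matrix (Fin d) (Fin d) ℝ)
    (x : Fin d → ℝ) : (∑ k ∈ S, M k) *ᵥ x = ∑ k ∈ S, M k *ᵥ x := by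
  ext i
  simp only [Finset.sum_apply, mulVec, dotProduct, Matrix.sum_apply, Finset.sum_mul]
  rw [Finset.sum_comm]

lemma aux_spec_mulVec (v : Fin d → Fin d → ℝ)
    (hON : ∀ k l, v k ⬝ᵥ v l = if k = l then (1 : ℝ) else 0)
    (F : Finset (Fin d)) (f : Fin d → ℝ) (k : Fin d) :
    (∑ l ∈ F, f l • proj (v l)) *ᵥ v k = if k ∈ F then f k • v k else 0 := by
  rw [aux_sum_mulVec]
  have : ∀ l ∈ F, (f l • proj (v l)) *ᵥ v k = if l = k then f k • v k else 0 := by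
    intro l _
    rw [smul_mulVec, aux_proj_mulVec, hON l k]
    by_cases h : l = k <;> simp [h]
  rw [Finset.sum_congr rfl this, Finset.sum_ite_eq' F k (fun _ => f k • v k)]

/-- quadratic form of a spectral sum evaluated on a vector expressed in the eigenbasis. -/
lemma aux_quad_rep (v : Fin d → Fin d → ℝ)
    (hON : ∀ k l, v k ⬝ᵥ v l = if k = l then (1 : ℝ) else 0)
    (f : Fin d → ℝ) (S : Finset (Fin d)) (b : Fin d → ℝ) :
    (∑ k ∈ S, b k • v k) ⬝ᵥ ((∑ k, f k • proj (v k)) *ᵥ (∑ k ∈ S, b k • v k)) =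
      ∑ k ∈ S, f k * b k ^ 2 := by
  set x : Fin d → ℝ := ∑ k ∈ S, b k • v k with hx
  have h1 : (∑ k, f k • proj (v k)) *ᵥ x = ∑ k, (f k * (v k ⬝ᵥ x)) • v k := by
    rw [aux_sum_mulVec]
    exact Finset.sum_congr rfl fun k _ => by
      rw [smul_mulVec, aux_proj_mulVec, smul_smul]
  rw [h1, aux_dot_sum]
  have h2 : ∀ k ∈ Finset.univ, x ⬝ᵥ ((f k * (v k ⬝ᵥ x)) • v k) =
      if k ∈ S then f k * b k ^ 2 else 0 := by
    intro k _
    rw [dotProduct_smul, smul_eq_mul, dotProduct_comm x (v k),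
      aux_dot_single v hON S b k]
    by_cases h : k ∈ S <;> simp [h] <;> ring
  rw [Finset.sum_congr rfl h2, Finset.sum_ite_mem, Finset.univ_inter]

lemma aux_opNorm_quad (A : Matrix (Fin d) (Fin d) ℝ) (x : Fin d → ℝ) :
    |x ⬝ᵥ (A *ᵥ x)| ≤ opNorm A * (x ⬝ᵥ x) := by
  set y : EuclideanSpace ℝ (Fin d) := (WithLp.equiv 2 _).symm x with hy
  have happ : (Matrix.toEuclideanCLM (𝕜 := ℝ) A) y = (WithLp.equiv 2 _).symm (A *ᵥ x) := by
    rw [hy, WithLp.equiv_symm_apply, Matrix.toEuclideanCLM_toLp]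
  have h1 : x ⬝ᵥ (A *ᵥ x) = inner ℝ y ((Matrix.toEuclideanCLM (𝕜 := ℝ) A) y) := by
    rw [happ]
    simp [PiLp.inner_apply, RCLike.inner_apply, dotProduct, hy, WithLp.equiv_symm_apply, mul_comm]
  have h2 : x ⬝ᵥ x = ‖y‖ ^ 2 := by
    rw [hy, WithLp.equiv_symm_apply, EuclideanSpace.norm_sq_eq]
    simp [dotProduct, Real.norm_eq_abs, sq_abs, sq]
  rw [h1, h2]
  calc |inner ℝ y ((Matrix.toEuclideanCLM (𝕜 := ℝ) A) y)|
      ≤ ‖y‖ * ‖(Matrix.toEuclideanCLM (𝕜 := ℝ) A) y‖ := abs_real_inner_le_norm _ _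
    _ ≤ ‖y‖ * (‖Matrix.toEuclideanCLM (𝕜 := ℝ) A‖ * ‖y‖) := by
        gcongr; exact ContinuousLinearMap.le_opNorm _ _
    _ = opNorm A * ‖y‖ ^ 2 := by rw [opNorm]; ring

lemma aux_mulVec_dot (A : Matrix (Fin d) (Fin d) ℝ) (y z : Fin d → ℝ) :
    (A *ᵥ y) ⬝ᵥ z = y ⬝ᵥ (Aᵀ *ᵥ z) := by
  rw [dotProduct_mulVec, vecMul_transpose]

lemma aux_proj_symm (v : Fin d → ℝ) : (proj v)ᵀ = proj v := by
  ext i k; simp [proj, vecMulVec_apply, mul_comm]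

lemma aux_T_symm (lam : Fin d → ℝ) (u : Fin d → Fin d → ℝ) (j : Fin d) (gj : ℝ) :
    (sqrtAbsRes lam u j + (Real.sqrt gj)⁻¹ • proj (u j))ᵀ =
      sqrtAbsRes lam u j + (Real.sqrt gj)⁻¹ • proj (u j) := by
  rw [transpose_add, transpose_smul, aux_proj_symm, sqrtAbsRes, transpose_sum]
  simp_rw [transpose_smul, aux_proj_symm]

/-- the key quadratic-form bound for `E` on vectors orthogonal to `u j`. -/
lemma aux_key (lam : Fin d → ℝ) (u : Fin d → Fin d → ℝ)
    (hON : ∀ k l, u k ⬝ᵥ u l = if k = l then (1 : ℝ) else 0)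
    (E : Matrix (Fin d) (Fin d) ℝ)
    (j : Fin d) (gj : ℝ) (hgj_pos : 0 < gj)
    (hgap : ∀ k, k ≠ j → gj ≤ |lam k - lam j|)
    (S : Finset (Fin d)) (hS : j ∉ S) (a : Fin d → ℝ) :
    |(∑ k ∈ S, a k • u k) ⬝ᵥ (E *ᵥ ∑ k ∈ S, a k • u k)| ≤
      delta lam u j gj E * ∑ k ∈ S, |lam k - lam j| * a k ^ 2 := by
  set T : Matrix (Fin d) (Fin d) ℝ :=
    sqrtAbsRes lam u j + (Real.sqrt gj)⁻¹ • proj (u j) with hT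
  set y : Fin d → ℝ := ∑ k ∈ S, (Real.sqrt |lam k - lam j| * a k) • u k with hy
  have hsq : ∀ k ∈ S, (0:ℝ) < Real.sqrt |lam k - lam j| := by
    intro k hk
    have hkj : k ≠ j := fun h => hS (h ▸ hk)
    exact Real.sqrt_pos.mpr (lt_of_lt_of_le hgj_pos (hgap k hkj))
  have hTy : T *ᵥ y = ∑ k ∈ S, a k • u k := by
    have h1 : T *ᵥ y = ∑ k ∈ S, (Real.sqrt |lam k - lam j| * a k) • (T *ᵥ u k) := by
      show T.mulVecLin y = _
      rw [hy, map_sum]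
      exact Finset.sum_congr rfl fun k _ => by
        rw [LinearMap.map_smul, Matrix.mulVecLin_apply]
    rw [h1]
    refine Finset.sum_congr rfl fun k hk => ?_
    have hkj : k ≠ j := fun h => hS (h ▸ hk)
    have h2 : T *ᵥ u k = (Real.sqrt |lam k - lam j|)⁻¹ • u k := by
      rw [hT, add_mulVec, smul_mulVec, aux_proj_mulVec, hON j k,
        if_neg (fun h => hkj h.symm), sqrtAbsRes,
        aux_spec_mulVec u hON _ _ k, if_pos (by simp [hkj])]
      simp
    rw [h2, smul_smul, mul_assoc, mul_comm (a k), ← mul_assoc,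
      mul_inv_cancel₀ (ne_of_gt (hsq k hk)), one_mul]
  have hyn : y ⬝ᵥ y = ∑ k ∈ S, |lam k - lam j| * a k ^ 2 := by
    rw [hy, aux_normsq u hON]
    exact Finset.sum_congr rfl fun k hk => by
      rw [mul_pow, Real.sq_sqrt (abs_nonneg _)]
  have hquad : (∑ k ∈ S, a k • u k) ⬝ᵥ (E *ᵥ ∑ k ∈ S, a k • u k) =
      y ⬝ᵥ ((T * E * T) *ᵥ y) := by
    rw [← hTy, ← mulVec_mulVec, aux_mulVec_dot, aux_T_symm, ← hT, mulVec_mulVec,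
      mulVec_mulVec, mul_assoc]
  rw [hquad, ← hyn]
  exact aux_opNorm_quad _ _

lemma aux_li (v : Fin d → Fin d → ℝ)
    (hON : ∀ k l, v k ⬝ᵥ v l = if k = l then (1 : ℝ) else 0) :
    LinearIndependent ℝ v := by
  rw [Fintype.linearIndependent_iff]
  intro g hg i
  have h := congrArg (fun z => v i ⬝ᵥ z) hg
  simpa [aux_dot_single v hON Finset.univ g i] using h

lemma aux_span_coeffs (v : Fin d → Fin d → ℝ)
    (S : Finset (Fin d)) (x : Fin d → ℝ)
    (hx : x ∈ Submodule.span ℝ (Set.range (fun k : {k // k ∈ S} => v k))) :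
    ∃ a : Fin d → ℝ, ∑ k ∈ S, a k • v k = x := by
  rw [Submodule.mem_span_range_iff_exists_fun] at hx
  obtain ⟨c, hc⟩ := hx
  refine ⟨fun k => if h : k ∈ S then c ⟨k, h⟩ else 0, ?_⟩
  rw [← hc, ← Finset.sum_attach S (fun k => (if h : k ∈ S then c ⟨k, h⟩ else 0) • v k)]
  rw [← Finset.univ_eq_attach]
  exact Finset.sum_congr rfl fun i _ => by rw [dif_pos i.2]

lemma aux_inter (v w : Fin d → Fin d → ℝ)
    (hONv : ∀ k l, v k ⬝ᵥ v l = if k = l then (1 : ℝ) else 0)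
    (hONw : ∀ k l, w k ⬝ᵥ w l = if k = l then (1 : ℝ) else 0)
    (S Sw : Finset (Fin d)) (hcard : d + 1 ≤ S.card + Sw.card) :
    ∃ a b : Fin d → ℝ, (∑ k ∈ S, a k • v k = ∑ k ∈ Sw, b k • w k) ∧
      ∑ k ∈ S, a k • v k ≠ 0 := by
  set p := Submodule.span ℝ (Set.range (fun k : {k // k ∈ S} => v k)) with hp
  set q := Submodule.span ℝ (Set.range (fun k : {k // k ∈ Sw} => w k)) with hq
  have hliS : LinearIndependent ℝ (fun k : {k // k ∈ S} => v k) :=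
    (aux_li v hONv).comp _ Subtype.val_injective
  have hliSw : LinearIndependent ℝ (fun k : {k // k ∈ Sw} => w k) :=
    (aux_li w hONw).comp _ Subtype.val_injective
  have hfp : Module.finrank ℝ p = S.card := by
    rw [hp, finrank_span_eq_card hliS]
    exact Fintype.card_coe S
  have hfq : Module.finrank ℝ q = Sw.card := by
    rw [hq, finrank_span_eq_card hliSw]
    exact Fintype.card_coe Sw
  have hle : Module.finrank ℝ ↥(p ⊔ q) ≤ d := by
    have := Submodule.finrank_le (p ⊔ q)
    rwa [Module.finrank_fin_fun ℝ] at this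
  have hpos : 0 < Module.finrank ℝ ↥(p ⊓ q) := by
    have h := Submodule.finrank_sup_add_finrank_inf_eq p q
    omega
  rw [Module.finrank_pos_iff] at hpos
  obtain ⟨x, hx⟩ := exists_ne (0 : ↥(p ⊓ q))
  have hxp : (x : Fin d → ℝ) ∈ p := x.2.1
  have hxq : (x : Fin d → ℝ) ∈ q := x.2.2
  obtain ⟨a, ha⟩ := aux_span_coeffs v S x hxp
  obtain ⟨b, hb⟩ := aux_span_coeffs w Sw x hxq
  refine ⟨a, b, by rw [ha, hb], ?_⟩
  rw [ha]
  exact fun h => hx (Subtype.ext (by simpa using h))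

end aux

theorem stmt3 {d : ℕ} (lam : Fin d → ℝ) (u : Fin d → Fin d → ℝ)
    (hON : ∀ k l, u k ⬝ᵥ u l = if k = l then (1 : ℝ) else 0)
    (hlam : Antitone lam)
    (E : Matrix (Fin d) (Fin d) ℝ) (hE : E.IsSymm)
    (j : Fin d) (gj : ℝ) (hgj_pos : 0 < gj)
    (hgj : IsLeast {x : ℝ | ∃ k, k ≠ j ∧ x = |lam k - lam j|} gj)
    (lamh : Fin d → ℝ) (uh : Fin d → Fin d → ℝ)
    (hONh : ∀ k l, uh k ⬝ᵥ uh l = if k = l then (1 : ℝ) else 0)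
    (hlamh : Antitone lamh)
    (hdecomp : (∑ k, lam k • proj (u k)) + E = ∑ k, lamh k • proj (uh k))
    (hdelta : delta lam u j gj E < 1 / 2)
    (j1 : Fin d) (hj1 : (j1 : ℕ) = (j : ℕ) + 1)
    (j0 : Fin d) (hj0 : (j0 : ℕ) + 1 = (j : ℕ)) :
    lamh j1 - lam j1 ≤ delta lam u j gj E * (lam j - lam j1) ∧
      lamh j0 - lam j0 ≥ -(delta lam u j gj E * (lam j0 - lam j)) := by
  set δ := delta lam u j gj E with hδ
  have hδ0 : 0 ≤ δ := norm_nonneg _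
  have hgap : ∀ k, k ≠ j → gj ≤ |lam k - lam j| := fun k hk => hgj.2 ⟨k, hk, rfl⟩
  constructor
  · -- upper bound for λ̂_{j+1}
    have hcard : d + 1 ≤ (Finset.Ioi j).card + (Finset.Iic j1).card := by
      rw [Fin.card_Ioi, Fin.card_Iic]
      have := j1.isLt
      omega
    obtain ⟨a, b, hab, hne⟩ := aux_inter u uh hON hONh _ _ hcard
    set X : Fin d → ℝ := ∑ k ∈ Finset.Ioi j, a k • u k with hX
    have hXu : X ⬝ᵥ X = ∑ k ∈ Finset.Ioi j, a k ^ 2 := aux_normsq u hON _ _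
    have hXw : X ⬝ᵥ X = ∑ k ∈ Finset.Iic j1, b k ^ 2 := by
      rw [hab]; exact aux_normsq uh hONh _ _
    have hNpos : 0 < X ⬝ᵥ X := by
      rcases lt_or_eq_of_le (Finset.sum_nonneg
        (fun i _ => mul_self_nonneg (X i)) : 0 ≤ X ⬝ᵥ X) with h | h
      · exact h
      · exact absurd (dotProduct_self_eq_zero.mp h.symm) hne
    have hjS : j ∉ Finset.Ioi j := by simp
    have hAw : X ⬝ᵥ ((∑ k, lamh k • proj (uh k)) *ᵥ X) =
        ∑ k ∈ Finset.Iic j1, lamh k * b k ^ 2 := by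
      rw [hab]; exact aux_quad_rep uh hONh _ _ _
    have hAu : X ⬝ᵥ ((∑ k, lam k • proj (u k)) *ᵥ X) =
        ∑ k ∈ Finset.Ioi j, lam k * a k ^ 2 := aux_quad_rep u hON _ _ _
    have hEb : |X ⬝ᵥ (E *ᵥ X)| ≤ δ * ∑ k ∈ Finset.Ioi j, |lam k - lam j| * a k ^ 2 :=
      aux_key lam u hON E j gj hgj_pos hgap _ hjS a
    have hlow : lamh j1 * (X ⬝ᵥ X) ≤ X ⬝ᵥ ((∑ k, lamh k • proj (uh k)) *ᵥ X) := by
      rw [hAw, hXw, Finset.mul_sum]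
      refine Finset.sum_le_sum fun k hk => ?_
      have hk1 : k ≤ j1 := Finset.mem_Iic.mp hk
      exact mul_le_mul_of_nonneg_right (hlamh hk1) (sq_nonneg _)
    have hhigh : X ⬝ᵥ ((∑ k, lamh k • proj (uh k)) *ᵥ X) ≤
        (lam j1 + δ * (lam j - lam j1)) * (X ⬝ᵥ X) := by
      have hsplit : X ⬝ᵥ ((∑ k, lamh k • proj (uh k)) *ᵥ X) =
          X ⬝ᵥ ((∑ k, lam k • proj (u k)) *ᵥ X) + X ⬝ᵥ (E *ᵥ X) := by
        rw [← hdecomp, add_mulVec, dotProduct_add]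
      rw [hsplit, hXu, Finset.mul_sum]
      have h1 : X ⬝ᵥ (E *ᵥ X) ≤ δ * ∑ k ∈ Finset.Ioi j, |lam k - lam j| * a k ^ 2 :=
        le_trans (le_abs_self _) hEb
      rw [hAu]
      have h2 : ∑ k ∈ Finset.Ioi j, lam k * a k ^ 2 +
          δ * ∑ k ∈ Finset.Ioi j, |lam k - lam j| * a k ^ 2 ≤
          ∑ k ∈ Finset.Ioi j, (lam j1 + δ * (lam j - lam j1)) * a k ^ 2 := by
        rw [Finset.mul_sum, ← Finset.sum_add_distrib]
        refine Finset.sum_le_sum fun k hk => ?_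
        have hjk : j < k := Finset.mem_Ioi.mp hk
        have hj1k : j1 ≤ k := by rw [Fin.le_def]; rw [Fin.lt_def] at hjk; omega
        have hjj1 : j ≤ j1 := by rw [Fin.le_def]; omega
        have hlk : lam k ≤ lam j1 := hlam hj1k
        have hlj : lam j1 ≤ lam j := hlam hjj1
        have habs : |lam k - lam j| = lam j - lam k := by
          rw [abs_of_nonpos (by linarith [hlam hjk.le])]; ring
        rw [habs]
        have key : 0 ≤ (1 - δ) * (lam j1 - lam k) * a k ^ 2 :=
          mul_nonneg (mul_nonneg (by linarith) (by linarith)) (sq_nonneg _)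
        have hiden : (lam j1 + δ * (lam j - lam j1)) * a k ^ 2 -
            (lam k * a k ^ 2 + δ * ((lam j - lam k) * a k ^ 2)) =
            (1 - δ) * (lam j1 - lam k) * a k ^ 2 := by ring
        linarith
      linarith
    have : lamh j1 * (X ⬝ᵥ X) ≤ (lam j1 + δ * (lam j - lam j1)) * (X ⬝ᵥ X) :=
      le_trans hlow hhigh
    have := le_of_mul_le_mul_right this hNpos
    linarith
  · -- lower bound for λ̂_{j-1}
    have hcard : d + 1 ≤ (Finset.Iic j0).card + (Finset.Ici j0).card := by
      rw [Fin.card_Ici, Fin.card_Iic]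
      have := j0.isLt
      omega
    obtain ⟨a, b, hab, hne⟩ := aux_inter u uh hON hONh _ _ hcard
    set X : Fin d → ℝ := ∑ k ∈ Finset.Iic j0, a k • u k with hX
    have hXu : X ⬝ᵥ X = ∑ k ∈ Finset.Iic j0, a k ^ 2 := aux_normsq u hON _ _
    have hXw : X ⬝ᵥ X = ∑ k ∈ Finset.Ici j0, b k ^ 2 := by
      rw [hab]; exact aux_normsq uh hONh _ _
    have hNpos : 0 < X ⬝ᵥ X := by
      rcases lt_or_eq_of_le (Finset.sum_nonneg
        (fun i _ => mul_self_nonneg (X i)) : 0 ≤ X ⬝ᵥ X) with h | h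
      · exact h
      · exact absurd (dotProduct_self_eq_zero.mp h.symm) hne
    have hj0j : j0 < j := by rw [Fin.lt_def]; omega
    have hjS : j ∉ Finset.Iic j0 := by
      simp only [Finset.mem_Iic]
      exact fun h => absurd (lt_of_le_of_lt h hj0j) (lt_irrefl j)
    have hAw : X ⬝ᵥ ((∑ k, lamh k • proj (uh k)) *ᵥ X) =
        ∑ k ∈ Finset.Ici j0, lamh k * b k ^ 2 := by
      rw [hab]; exact aux_quad_rep uh hONh _ _ _
    have hAu : X ⬝ᵥ ((∑ k, lam k • proj (u k)) *ᵥ X) =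
        ∑ k ∈ Finset.Iic j0, lam k * a k ^ 2 := aux_quad_rep u hON _ _ _
    have hEb : |X ⬝ᵥ (E *ᵥ X)| ≤ δ * ∑ k ∈ Finset.Iic j0, |lam k - lam j| * a k ^ 2 :=
      aux_key lam u hON E j gj hgj_pos hgap _ hjS a
    have hhigh : X ⬝ᵥ ((∑ k, lamh k • proj (uh k)) *ᵥ X) ≤ lamh j0 * (X ⬝ᵥ X) := by
      rw [hAw, hXw, Finset.mul_sum]
      refine Finset.sum_le_sum fun k hk => ?_
      have hk1 : j0 ≤ k := Finset.mem_Ici.mp hk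
      exact mul_le_mul_of_nonneg_right (hlamh hk1) (sq_nonneg _)
    have hlow : (lam j0 - δ * (lam j0 - lam j)) * (X ⬝ᵥ X) ≤
        X ⬝ᵥ ((∑ k, lamh k • proj (uh k)) *ᵥ X) := by
      have hsplit : X ⬝ᵥ ((∑ k, lamh k • proj (uh k)) *ᵥ X) =
          X ⬝ᵥ ((∑ k, lam k • proj (u k)) *ᵥ X) + X ⬝ᵥ (E *ᵥ X) := by
        rw [← hdecomp, add_mulVec, dotProduct_add]
      rw [hsplit, hXu, Finset.mul_sum, hAu]
      have h1 : -(δ * ∑ k ∈ Finset.Iic j0, |lam k - lam j| * a k ^ 2) ≤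
          X ⬝ᵥ (E *ᵥ X) := neg_le_of_abs_le hEb
      have h2 : ∑ k ∈ Finset.Iic j0, (lam j0 - δ * (lam j0 - lam j)) * a k ^ 2 ≤
          ∑ k ∈ Finset.Iic j0, lam k * a k ^ 2 -
          δ * ∑ k ∈ Finset.Iic j0, |lam k - lam j| * a k ^ 2 := by
        rw [Finset.mul_sum, ← Finset.sum_sub_distrib]
        refine Finset.sum_le_sum fun k hk => ?_
        have hkj0 : k ≤ j0 := Finset.mem_Iic.mp hk
        have hkj : k ≤ j := le_of_lt (lt_of_le_of_lt hkj0 hj0j)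
        have hlk : lam j0 ≤ lam k := hlam hkj0
        have hlj : lam j ≤ lam j0 := hlam hj0j.le
        have habs : |lam k - lam j| = lam k - lam j := by
          rw [abs_of_nonneg (by linarith [hlam hkj])]
        rw [habs]
        have key : 0 ≤ (1 - δ) * (lam k - lam j0) * a k ^ 2 :=
          mul_nonneg (mul_nonneg (by linarith) (by linarith)) (sq_nonneg _)
        have hiden : lam k * a k ^ 2 - δ * ((lam k - lam j) * a k ^ 2) -
            (lam j0 - δ * (lam j0 - lam j)) * a k ^ 2 =
            (1 - δ) * (lam k - lam j0) * a k ^ 2 := by ring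
        linarith
      linarith
    have : (lam j0 - δ * (lam j0 - lam j)) * (X ⬝ᵥ X) ≤ lamh j0 * (X ⬝ᵥ X) :=
      le_trans hlow hhigh
    have := le_of_mul_le_mul_right this hNpos
    linarith
end

section
/- Suppose λ_j is a simple eigenvalue of Σ with gap g_j > 0 and δ_j < 1/2. Then P_j (I − P̂_j) = P_j E R̂_j, where R̂_j = Σ_{k≠j} (λ̂_k − λ_j)^{-1} P̂_k is the reduced resolvent of Σ̂ at λ_j (well-defined since |λ̂_k − λ_j| > 0 for all k ≠ j under the hypothesis). -/
open Matrix Finset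

variable {d : ℕ}


lemma proj_mulVec (a v : Fin d → ℝ) : proj a *ᵥ v = (a ⬝ᵥ v) • a := by
  ext i
  simp [proj, mulVec, vecMulVec_apply, dotProduct, Finset.mul_sum, mul_comm, mul_left_comm]

lemma proj_mul_proj' (a b : Fin d → ℝ) : proj a * proj b = (a ⬝ᵥ b) • vecMulVec a b := by
  ext i k
  simp [proj, Matrix.mul_apply, vecMulVec_apply, dotProduct, Finset.sum_mul, Finset.mul_sum]
  ring_nf
  exact Finset.sum_congr rfl fun x _ => by ring

lemma proj_transpose (a : Fin d → ℝ) : (proj a)ᵀ = proj a := by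
  ext i k; simp [proj, vecMulVec_apply, transpose_apply, mul_comm]

lemma sum_proj_eq_one (u : Fin d → Fin d → ℝ)
    (hON : ∀ k l, u k ⬝ᵥ u l = if k = l then (1 : ℝ) else 0) :
    ∑ k, proj (u k) = (1 : Matrix (Fin d) (Fin d) ℝ) := by
  have h1 : (Matrix.of u) * (Matrix.of u)ᵀ = 1 := by
    ext k l
    simpa [Matrix.mul_apply, dotProduct, Matrix.one_apply] using hON k l
  have h2 : (Matrix.of u)ᵀ * (Matrix.of u) = 1 := mul_eq_one_comm.mp h1
  ext a b
  rw [← h2]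
  simp only [Matrix.mul_apply, proj, Matrix.sum_apply, vecMulVec_apply, transpose_apply,
    Matrix.of_apply]

lemma quadform_sum (s : Finset (Fin d)) (μ : Fin d → ℝ) (u : Fin d → Fin d → ℝ) (v : Fin d → ℝ) :
    v ⬝ᵥ ((∑ k ∈ s, μ k • proj (u k)) *ᵥ v) = ∑ k ∈ s, μ k * (u k ⬝ᵥ v)^2 := by
  induction s using Finset.induction with
  | empty => simp
  | insert _ _ hk ih =>
      rw [Finset.sum_insert hk, Finset.sum_insert hk, Matrix.add_mulVec, dotProduct_add, ih]
      congr 1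
      rw [Matrix.smul_mulVec, proj_mulVec]
      simp [dotProduct_smul, dotProduct_comm, sq]

lemma quad_le_opNorm (M : Matrix (Fin d) (Fin d) ℝ) (w : Fin d → ℝ) :
    |w ⬝ᵥ (M *ᵥ w)| ≤ opNorm M * (w ⬝ᵥ w) := by
  set x : EuclideanSpace ℝ (Fin d) := (WithLp.equiv 2 _).symm w with hx
  have h2 : w ⬝ᵥ (M *ᵥ w) = inner ℝ x (Matrix.toEuclideanCLM (𝕜 := ℝ) M x) := by
    rw [hx, inner_toEuclideanCLM]
    rfl
  have h3 : (w ⬝ᵥ w) = ‖x‖^2 := by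
    rw [← real_inner_self_eq_norm_sq]
    simp only [PiLp.inner_apply, dotProduct, RCLike.inner_apply, hx, WithLp.equiv_symm_apply, conj_trivial]
  rw [h2, h3]
  calc |inner ℝ x (Matrix.toEuclideanCLM (𝕜 := ℝ) M x)|
      ≤ ‖x‖ * ‖Matrix.toEuclideanCLM (𝕜 := ℝ) M x‖ := abs_real_inner_le_norm _ _
    _ ≤ ‖x‖ * (‖Matrix.toEuclideanCLM (𝕜 := ℝ) M‖ * ‖x‖) := by
        gcongr; exact ContinuousLinearMap.le_opNorm _ _
    _ = opNorm M * ‖x‖^2 := by rw [opNorm]; ring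

def dotL (a : Fin d → ℝ) : (Fin d → ℝ) →ₗ[ℝ] ℝ where
  toFun v := a ⬝ᵥ v
  map_add' x y := dotProduct_add a x y
  map_smul' c x := by simp

lemma dot_sum_smul {u : Fin d → Fin d → ℝ}
    (hON : ∀ k l, u k ⬝ᵥ u l = if k = l then (1 : ℝ) else 0)
    (t : Fin d → ℝ) (k : Fin d) :
    u k ⬝ᵥ (∑ l, t l • u l) = t k := by
  have : u k ⬝ᵥ (∑ l, t l • u l) = dotL (u k) (∑ l, t l • u l) := rfl
  rw [this, map_sum]
  simp [dotL, hON, Finset.sum_ite_eq']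

lemma sum_mulVec' {ι : Type*} [DecidableEq ι] (s : Finset ι) (A : ι → Matrix (Fin d) (Fin d) ℝ)
    (v : Fin d → ℝ) : (∑ k ∈ s, A k) *ᵥ v = ∑ k ∈ s, A k *ᵥ v := by
  induction s using Finset.induction with
  | empty => simp
  | insert _ _ hk ih => rw [Finset.sum_insert hk, Finset.sum_insert hk, Matrix.add_mulVec, ih]

lemma expand_vec {u : Fin d → Fin d → ℝ}
    (hON : ∀ k l, u k ⬝ᵥ u l = if k = l then (1 : ℝ) else 0) (v : Fin d → ℝ) :
    v = ∑ k, (u k ⬝ᵥ v) • u k := by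
  have h1 : v = (1 : Matrix (Fin d) (Fin d) ℝ) *ᵥ v := by simp
  conv_lhs => rw [h1, ← sum_proj_eq_one u hON, sum_mulVec']
  exact Finset.sum_congr rfl fun k _ => proj_mulVec _ _

lemma exists_ker (f : (Fin d → ℝ) →ₗ[ℝ] (Fin d → ℝ)) (k : Fin d) (hk : ∀ v, f v k = 0) :
    ∃ v, v ≠ 0 ∧ f v = 0 := by
  by_contra h
  push_neg at h
  have hinj : Function.Injective f := by
    rw [← LinearMap.ker_eq_bot, LinearMap.ker_eq_bot']
    intro v hv
    by_contra hv0
    exact (h v hv0) hv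
  have hsurj : Function.Surjective f := LinearMap.injective_iff_surjective.mp hinj
  obtain ⟨v, hv⟩ := hsurj (Pi.single k 1)
  have := hk v
  rw [hv] at this
  simp at this

lemma key_bound (lam : Fin d → ℝ) (u : Fin d → Fin d → ℝ) (j : Fin d) (gj : ℝ)
    (hON : ∀ k l, u k ⬝ᵥ u l = if k = l then (1 : ℝ) else 0)
    (hgj_pos : 0 < gj)
    (hgap : ∀ k, k ≠ j → gj ≤ |lam k - lam j|)
    (E : Matrix (Fin d) (Fin d) ℝ) (v : Fin d → ℝ) :
    |v ⬝ᵥ (E *ᵥ v)| ≤ delta lam u j gj E *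
      ∑ k, (if k = j then gj else |lam k - lam j|) * (u k ⬝ᵥ v)^2 := by
  classical
  set b : Fin d → ℝ := fun k => if k = j then Real.sqrt gj else Real.sqrt |lam k - lam j|
    with hb
  have hbpos : ∀ k, 0 < b k := by
    intro k
    by_cases hk : k = j
    · simp [hb, hk, Real.sqrt_pos, hgj_pos]
    · simp only [hb, hk, if_false]
      exact Real.sqrt_pos.mpr (lt_of_lt_of_le hgj_pos (hgap k hk))
  set A : Matrix (Fin d) (Fin d) ℝ :=
    sqrtAbsRes lam u j + (Real.sqrt gj)⁻¹ • proj (u j) with hA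
  have hAeq : A = ∑ k, (b k)⁻¹ • proj (u k) := by
    rw [hA, sqrtAbsRes, Finset.filter_ne' Finset.univ j,
      ← Finset.sum_erase_add Finset.univ (fun k => (b k)⁻¹ • proj (u k)) (Finset.mem_univ j)]
    congr 1
    · exact Finset.sum_congr rfl fun k hk => by
        simp [hb, Finset.ne_of_mem_erase hk]
    · simp [hb]
  set w : Fin d → ℝ := ∑ k, (b k * (u k ⬝ᵥ v)) • u k with hw
  have hdotw : ∀ k, u k ⬝ᵥ w = b k * (u k ⬝ᵥ v) := fun k => dot_sum_smul hON _ k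
  have hAw : A *ᵥ w = v := by
    rw [hAeq, sum_mulVec']
    have : ∀ k : Fin d, ((b k)⁻¹ • proj (u k)) *ᵥ w = (u k ⬝ᵥ v) • u k := by
      intro k
      rw [Matrix.smul_mulVec, proj_mulVec, hdotw, smul_smul, ← mul_assoc,
        inv_mul_cancel₀ (ne_of_gt (hbpos k)), one_mul]
    rw [Finset.sum_congr rfl fun k _ => this k]
    exact (expand_vec hON v).symm
  have hAsym : Aᵀ = A := by
    rw [hAeq, Matrix.transpose_sum]
    exact Finset.sum_congr rfl fun k _ => by rw [Matrix.transpose_smul, proj_transpose]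
  have hsym_dot : ∀ x, w ⬝ᵥ (A *ᵥ x) = v ⬝ᵥ x := by
    intro x
    rw [Matrix.dotProduct_mulVec]
    have h5 : w ᵥ* A = A *ᵥ w := by
      calc w ᵥ* A = w ᵥ* Aᵀ := by rw [hAsym]
        _ = A *ᵥ w := Matrix.vecMul_transpose A w
    rw [h5, hAw]
  have hquad : v ⬝ᵥ (E *ᵥ v) = w ⬝ᵥ ((A * E * A) *ᵥ w) := by
    have : w ⬝ᵥ ((A * E * A) *ᵥ w) = v ⬝ᵥ (E *ᵥ v) := by
      rw [← Matrix.mulVec_mulVec, ← Matrix.mulVec_mulVec, hAw, hsym_dot]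
    exact this.symm
  have hww : w ⬝ᵥ w = ∑ k, (if k = j then gj else |lam k - lam j|) * (u k ⬝ᵥ v)^2 := by
    have h1 : w ⬝ᵥ w = dotL w (∑ k, (b k * (u k ⬝ᵥ v)) • u k) :=
      congrArg (fun x => dotL w x) hw
    rw [h1, map_sum]
    refine Finset.sum_congr rfl fun k _ => ?_
    have h2 : dotL w ((b k * (u k ⬝ᵥ v)) • u k) = (b k * (u k ⬝ᵥ v)) * (u k ⬝ᵥ w) := by
      simp [dotL, dotProduct_comm]
    rw [h2, hdotw]
    have hb2 : b k * b k = if k = j then gj else |lam k - lam j| := by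
      by_cases hk : k = j
      · simp [hb, hk, Real.mul_self_sqrt hgj_pos.le]
      · simp [hb, hk, Real.mul_self_sqrt (abs_nonneg _)]
    rw [← hb2]; ring
  rw [hquad, ← hww]
  exact quad_le_opNorm _ _

lemma collision_gt (lam : Fin d → ℝ) (u : Fin d → Fin d → ℝ)
    (hON : ∀ k l, u k ⬝ᵥ u l = if k = l then (1 : ℝ) else 0)
    (hlam : Antitone lam)
    (E : Matrix (Fin d) (Fin d) ℝ)
    (j : Fin d) (gj : ℝ) (hgj_pos : 0 < gj)
    (hgap : ∀ k, k ≠ j → gj ≤ |lam k - lam j|)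
    (lamh : Fin d → ℝ) (uh : Fin d → Fin d → ℝ)
    (hONh : ∀ k l, uh k ⬝ᵥ uh l = if k = l then (1 : ℝ) else 0)
    (hlamh : Antitone lamh)
    (hdecomp : (∑ k, lam k • proj (u k)) + E = ∑ k, lamh k • proj (uh k))
    (hdelta : delta lam u j gj E < 1 / 2)
    (k : Fin d) (hjk : j < k) (hcol : lamh k = lam j) : False := by
  classical
  set f : (Fin d → ℝ) →ₗ[ℝ] (Fin d → ℝ) :=
    LinearMap.pi (fun i => if i ≤ j then dotL (u i) else if k < i then dotL (uh i) else 0)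
    with hf
  have hfk : ∀ v, f v k = 0 := by
    intro v
    simp [hf, LinearMap.pi_apply, not_le.mpr hjk, lt_irrefl]
  obtain ⟨v, hv0, hfv⟩ := exists_ker f k hfk
  have hu0 : ∀ i, i ≤ j → u i ⬝ᵥ v = 0 := by
    intro i hi
    have h := congrFun hfv i
    simpa [hf, LinearMap.pi_apply, hi, dotL] using h
  have huh0 : ∀ i, k < i → uh i ⬝ᵥ v = 0 := by
    intro i hi
    have h := congrFun hfv i
    have h1 : ¬ i ≤ j := not_le.mpr (hjk.trans hi)
    simpa [hf, LinearMap.pi_apply, h1, hi, dotL] using h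
  have hn2nonneg : (0:ℝ) ≤ v ⬝ᵥ v := Finset.sum_nonneg fun i _ => mul_self_nonneg _
  have hn2pos : 0 < v ⬝ᵥ v :=
    lt_of_le_of_ne hn2nonneg (fun h => hv0 (dotProduct_self_eq_zero.mp h.symm))
  have hsum_c : v ⬝ᵥ v = ∑ i, (u i ⬝ᵥ v)^2 := by
    have h1 : v ⬝ᵥ v = v ⬝ᵥ ((∑ i, (1:ℝ) • proj (u i)) *ᵥ v) := by
      have : (∑ i, (1:ℝ) • proj (u i)) = (1 : Matrix (Fin d) (Fin d) ℝ) := by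
        simpa using sum_proj_eq_one u hON
      rw [this]; simp
    rw [h1, quadform_sum]; simp
  have hsum_ch : v ⬝ᵥ v = ∑ i, (uh i ⬝ᵥ v)^2 := by
    have h1 : v ⬝ᵥ v = v ⬝ᵥ ((∑ i, (1:ℝ) • proj (uh i)) *ᵥ v) := by
      have : (∑ i, (1:ℝ) • proj (uh i)) = (1 : Matrix (Fin d) (Fin d) ℝ) := by
        simpa using sum_proj_eq_one uh hONh
      rw [this]; simp
    rw [h1, quadform_sum]; simp
  have hqS : v ⬝ᵥ ((∑ i, lam i • proj (u i)) *ᵥ v) = ∑ i, lam i * (u i ⬝ᵥ v)^2 := by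
    simpa using quadform_sum Finset.univ lam u v
  have hqSh : v ⬝ᵥ ((∑ i, lamh i • proj (uh i)) *ᵥ v) = ∑ i, lamh i * (uh i ⬝ᵥ v)^2 := by
    simpa using quadform_sum Finset.univ lamh uh v
  have habs : ∀ i, j < i → |lam i - lam j| = lam j - lam i := by
    intro i hi
    rw [abs_of_nonpos (by linarith [hlam hi.le])]
    ring
  -- upper bound on the Σ quadratic form
  have hqS_le : ∑ i, lam i * (u i ⬝ᵥ v)^2 ≤ (lam j - gj) * (v ⬝ᵥ v) := by
    rw [hsum_c, Finset.mul_sum]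
    refine Finset.sum_le_sum fun i _ => ?_
    by_cases hi : i ≤ j
    · rw [hu0 i hi]; simp
    · push_neg at hi
      have h2 : gj ≤ lam j - lam i := by
        have := hgap i (ne_of_gt hi)
        rwa [habs i hi] at this
      have : lam i ≤ lam j - gj := by linarith
      exact mul_le_mul_of_nonneg_right this (sq_nonneg _)
  -- lower bound on the Σ̂ quadratic form
  have hqSh_ge : lam j * (v ⬝ᵥ v) ≤ ∑ i, lamh i * (uh i ⬝ᵥ v)^2 := by
    rw [hsum_ch, Finset.mul_sum]
    refine Finset.sum_le_sum fun i _ => ?_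
    by_cases hi : i ≤ k
    · have : lam j ≤ lamh i := by rw [← hcol]; exact hlamh hi
      exact mul_le_mul_of_nonneg_right this (sq_nonneg _)
    · push_neg at hi
      rw [huh0 i hi]; simp
  -- the weighted sum equals lam j * n2 - qS
  have hweight : ∑ i, (if i = j then gj else |lam i - lam j|) * (u i ⬝ᵥ v)^2
      = lam j * (v ⬝ᵥ v) - ∑ i, lam i * (u i ⬝ᵥ v)^2 := by
    rw [hsum_c, Finset.mul_sum, ← Finset.sum_sub_distrib]
    refine Finset.sum_congr rfl fun i _ => ?_
    by_cases hi : i ≤ j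
    · rw [hu0 i hi]; simp
    · push_neg at hi
      rw [if_neg (ne_of_gt hi), habs i hi]
      ring
  have hqE : v ⬝ᵥ (E *ᵥ v) =
      (∑ i, lamh i * (uh i ⬝ᵥ v)^2) - ∑ i, lam i * (u i ⬝ᵥ v)^2 := by
    have hE_eq : E = (∑ i, lamh i • proj (uh i)) - (∑ i, lam i • proj (u i)) := by
      rw [← hdecomp]; abel
    rw [hE_eq, Matrix.sub_mulVec, dotProduct_sub, hqS, hqSh]
  have hbd := key_bound lam u j gj hON hgj_pos hgap E v
  rw [hweight] at hbd
  set t : ℝ := lam j * (v ⬝ᵥ v) - ∑ i, lam i * (u i ⬝ᵥ v)^2 with ht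
  have htpos : 0 < t := by
    have : gj * (v ⬝ᵥ v) ≤ t := by
      rw [ht]
      nlinarith [hqS_le, hn2pos]
    nlinarith [hn2pos, hgj_pos]
  have hqE_ge : t ≤ v ⬝ᵥ (E *ᵥ v) := by
    rw [hqE, ht]
    linarith [hqSh_ge]
  have : t ≤ delta lam u j gj E * t := le_trans hqE_ge (le_trans (le_abs_self _) hbd)
  nlinarith [htpos, hdelta]

lemma collision_lt (lam : Fin d → ℝ) (u : Fin d → Fin d → ℝ)
    (hON : ∀ k l, u k ⬝ᵥ u l = if k = l then (1 : ℝ) else 0)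
    (hlam : Antitone lam)
    (E : Matrix (Fin d) (Fin d) ℝ)
    (j : Fin d) (gj : ℝ) (hgj_pos : 0 < gj)
    (hgap : ∀ k, k ≠ j → gj ≤ |lam k - lam j|)
    (lamh : Fin d → ℝ) (uh : Fin d → Fin d → ℝ)
    (hONh : ∀ k l, uh k ⬝ᵥ uh l = if k = l then (1 : ℝ) else 0)
    (hlamh : Antitone lamh)
    (hdecomp : (∑ k, lam k • proj (u k)) + E = ∑ k, lamh k • proj (uh k))
    (hdelta : delta lam u j gj E < 1 / 2)
    (k : Fin d) (hjk : k < j) (hcol : lamh k = lam j) : False := by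
  classical
  set f : (Fin d → ℝ) →ₗ[ℝ] (Fin d → ℝ) :=
    LinearMap.pi (fun i => if j ≤ i then dotL (u i) else if i < k then dotL (uh i) else 0)
    with hf
  have hfk : ∀ v, f v k = 0 := by
    intro v
    simp [hf, LinearMap.pi_apply, not_le.mpr hjk, lt_irrefl]
  obtain ⟨v, hv0, hfv⟩ := exists_ker f k hfk
  have hu0 : ∀ i, j ≤ i → u i ⬝ᵥ v = 0 := by
    intro i hi
    have h := congrFun hfv i
    simpa [hf, LinearMap.pi_apply, hi, dotL] using h
  have huh0 : ∀ i, i < k → uh i ⬝ᵥ v = 0 := by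
    intro i hi
    have h := congrFun hfv i
    have h1 : ¬ j ≤ i := not_le.mpr (hi.trans hjk)
    simpa [hf, LinearMap.pi_apply, h1, hi, dotL] using h
  have hn2nonneg : (0:ℝ) ≤ v ⬝ᵥ v := Finset.sum_nonneg fun i _ => mul_self_nonneg _
  have hn2pos : 0 < v ⬝ᵥ v :=
    lt_of_le_of_ne hn2nonneg (fun h => hv0 (dotProduct_self_eq_zero.mp h.symm))
  have hsum_c : v ⬝ᵥ v = ∑ i, (u i ⬝ᵥ v)^2 := by
    have h1 : v ⬝ᵥ v = v ⬝ᵥ ((∑ i, (1:ℝ) • proj (u i)) *ᵥ v) := by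
      have : (∑ i, (1:ℝ) • proj (u i)) = (1 : Matrix (Fin d) (Fin d) ℝ) := by
        simpa using sum_proj_eq_one u hON
      rw [this]; simp
    rw [h1, quadform_sum]; simp
  have hsum_ch : v ⬝ᵥ v = ∑ i, (uh i ⬝ᵥ v)^2 := by
    have h1 : v ⬝ᵥ v = v ⬝ᵥ ((∑ i, (1:ℝ) • proj (uh i)) *ᵥ v) := by
      have : (∑ i, (1:ℝ) • proj (uh i)) = (1 : Matrix (Fin d) (Fin d) ℝ) := by
        simpa using sum_proj_eq_one uh hONh
      rw [this]; simp
    rw [h1, quadform_sum]; simp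
  have hqS : v ⬝ᵥ ((∑ i, lam i • proj (u i)) *ᵥ v) = ∑ i, lam i * (u i ⬝ᵥ v)^2 := by
    simpa using quadform_sum Finset.univ lam u v
  have hqSh : v ⬝ᵥ ((∑ i, lamh i • proj (uh i)) *ᵥ v) = ∑ i, lamh i * (uh i ⬝ᵥ v)^2 := by
    simpa using quadform_sum Finset.univ lamh uh v
  have habs : ∀ i, i < j → |lam i - lam j| = lam i - lam j := by
    intro i hi
    exact abs_of_nonneg (by linarith [hlam hi.le])
  -- lower bound on the Σ quadratic form
  have hqS_ge : (lam j + gj) * (v ⬝ᵥ v) ≤ ∑ i, lam i * (u i ⬝ᵥ v)^2 := by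
    rw [hsum_c, Finset.mul_sum]
    refine Finset.sum_le_sum fun i _ => ?_
    by_cases hi : j ≤ i
    · rw [hu0 i hi]; simp
    · push_neg at hi
      have h2 : gj ≤ lam i - lam j := by
        have := hgap i (ne_of_lt hi)
        rwa [habs i hi] at this
      have : lam j + gj ≤ lam i := by linarith
      exact mul_le_mul_of_nonneg_right this (sq_nonneg _)
  -- upper bound on the Σ̂ quadratic form
  have hqSh_le : ∑ i, lamh i * (uh i ⬝ᵥ v)^2 ≤ lam j * (v ⬝ᵥ v) := by
    rw [hsum_ch, Finset.mul_sum]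
    refine Finset.sum_le_sum fun i _ => ?_
    by_cases hi : k ≤ i
    · have : lamh i ≤ lam j := by rw [← hcol]; exact hlamh hi
      exact mul_le_mul_of_nonneg_right this (sq_nonneg _)
    · push_neg at hi
      rw [huh0 i hi]; simp
  have hweight : ∑ i, (if i = j then gj else |lam i - lam j|) * (u i ⬝ᵥ v)^2
      = (∑ i, lam i * (u i ⬝ᵥ v)^2) - lam j * (v ⬝ᵥ v) := by
    rw [hsum_c, Finset.mul_sum, ← Finset.sum_sub_distrib]
    refine Finset.sum_congr rfl fun i _ => ?_
    by_cases hi : j ≤ i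
    · rw [hu0 i hi]; simp
    · push_neg at hi
      rw [if_neg (ne_of_lt hi), habs i hi]
      ring
  have hqE : v ⬝ᵥ (E *ᵥ v) =
      (∑ i, lamh i * (uh i ⬝ᵥ v)^2) - ∑ i, lam i * (u i ⬝ᵥ v)^2 := by
    have hE_eq : E = (∑ i, lamh i • proj (uh i)) - (∑ i, lam i • proj (u i)) := by
      rw [← hdecomp]; abel
    rw [hE_eq, Matrix.sub_mulVec, dotProduct_sub, hqS, hqSh]
  have hbd := key_bound lam u j gj hON hgj_pos hgap E v
  rw [hweight] at hbd
  set t : ℝ := (∑ i, lam i * (u i ⬝ᵥ v)^2) - lam j * (v ⬝ᵥ v) with ht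
  have htpos : 0 < t := by
    have : gj * (v ⬝ᵥ v) ≤ t := by
      rw [ht]
      nlinarith [hqS_ge, hn2pos]
    nlinarith [hn2pos, hgj_pos]
  have hqE_le : v ⬝ᵥ (E *ᵥ v) ≤ -t := by
    rw [hqE, ht]
    linarith [hqSh_le]
  have h6 : t ≤ |v ⬝ᵥ (E *ᵥ v)| :=
    le_trans (by linarith) (neg_le_abs (v ⬝ᵥ (E *ᵥ v)))
  have : t ≤ delta lam u j gj E * t := le_trans h6 hbd
  nlinarith [htpos, hdelta]

lemma sig_mul_proj (lamv : Fin d → ℝ) (w : Fin d → Fin d → ℝ)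
    (hONw : ∀ k l, w k ⬝ᵥ w l = if k = l then (1:ℝ) else 0) (k : Fin d) :
    (∑ l, lamv l • proj (w l)) * proj (w k) = lamv k • proj (w k) := by
  rw [Finset.sum_mul, Finset.sum_eq_single k]
  · rw [smul_mul_assoc, proj_mul_proj', hONw k k]
    simp [proj]
  · intro l _ hl
    rw [smul_mul_assoc, proj_mul_proj', hONw l k, if_neg hl]
    simp
  · simp

lemma proj_mul_sig (lamv : Fin d → ℝ) (w : Fin d → Fin d → ℝ)
    (hONw : ∀ k l, w k ⬝ᵥ w l = if k = l then (1:ℝ) else 0) (k : Fin d) :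
    proj (w k) * (∑ l, lamv l • proj (w l)) = lamv k • proj (w k) := by
  rw [Finset.mul_sum, Finset.sum_eq_single k]
  · rw [mul_smul_comm, proj_mul_proj', hONw k k]
    simp [proj]
  · intro l _ hl
    rw [mul_smul_comm, proj_mul_proj', hONw k l, if_neg (Ne.symm hl)]
    simp
  · simp

theorem stmt5 {d : ℕ} (lam : Fin d → ℝ) (u : Fin d → Fin d → ℝ)
    (hON : ∀ k l, u k ⬝ᵥ u l = if k = l then (1 : ℝ) else 0)
    (hlam : Antitone lam)
    (E : Matrix (Fin d) (Fin d) ℝ) (hE : E.IsSymm)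
    (j : Fin d) (gj : ℝ) (hgj_pos : 0 < gj)
    (hgj : IsLeast {x : ℝ | ∃ k, k ≠ j ∧ x = |lam k - lam j|} gj)
    (lamh : Fin d → ℝ) (uh : Fin d → Fin d → ℝ)
    (hONh : ∀ k l, uh k ⬝ᵥ uh l = if k = l then (1 : ℝ) else 0)
    (hlamh : Antitone lamh)
    (hdecomp : (∑ k, lam k • proj (u k)) + E = ∑ k, lamh k • proj (uh k))
    (hdelta : delta lam u j gj E < 1 / 2) :
    proj (u j) * (1 - proj (uh j)) =
      proj (u j) * E *
        (∑ k ∈ Finset.univ.filter (fun k => k ≠ j), (lamh k - lam j)⁻¹ • proj (uh k)) := by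
  classical
  have hgap : ∀ k, k ≠ j → gj ≤ |lam k - lam j| := fun k hk => hgj.2 ⟨k, hk, rfl⟩
  have hne : ∀ k, k ≠ j → lamh k - lam j ≠ 0 := by
    intro k hk hc
    rcases lt_or_gt_of_ne hk with h | h
    · exact collision_lt lam u hON hlam E j gj hgj_pos hgap lamh uh hONh hlamh hdecomp
        hdelta k h (by linarith)
    · exact collision_gt lam u hON hlam E j gj hgj_pos hgap lamh uh hONh hlamh hdecomp
        hdelta k h (by linarith)
  set Sig : Matrix (Fin d) (Fin d) ℝ := ∑ k, lam k • proj (u k) with hSig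
  set Sigh : Matrix (Fin d) (Fin d) ℝ := ∑ k, lamh k • proj (uh k) with hSigh
  set R : Matrix (Fin d) (Fin d) ℝ :=
    ∑ k ∈ Finset.univ.filter (fun k => k ≠ j), (lamh k - lam j)⁻¹ • proj (uh k) with hR
  have hER : E = Sigh - Sig := by rw [← hdecomp]; abel
  have h1 : proj (u j) * E * R = proj (u j) * (Sigh * R - lam j • R) :=
    calc proj (u j) * E * R
        = (proj (u j) * Sigh - lam j • proj (u j)) * R := by
          rw [hER, mul_sub, hSig, proj_mul_sig lam u hON j]
      _ = proj (u j) * (Sigh * R) - lam j • (proj (u j) * R) := by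
          rw [sub_mul, smul_mul_assoc, mul_assoc]
      _ = proj (u j) * (Sigh * R - lam j • R) := by
          rw [mul_sub, mul_smul_comm]
  have h2 : Sigh * R - lam j • R = 1 - proj (uh j) := by
    rw [hR, Finset.mul_sum, Finset.smul_sum, ← Finset.sum_sub_distrib]
    have hterm : ∀ k ∈ Finset.univ.filter (fun k => k ≠ j),
        Sigh * ((lamh k - lam j)⁻¹ • proj (uh k))
          - lam j • ((lamh k - lam j)⁻¹ • proj (uh k)) = proj (uh k) := by
      intro k hk
      have hkj : k ≠ j := (Finset.mem_filter.mp hk).2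
      rw [mul_smul_comm, hSigh, sig_mul_proj lamh uh hONh k, smul_smul, smul_smul, ← sub_smul]
      have h9 : (lamh k - lam j)⁻¹ * lamh k - lam j * (lamh k - lam j)⁻¹ = 1 := by
        have := hne k hkj
        field_simp
      rw [h9, one_smul]
    rw [Finset.sum_congr rfl hterm, Finset.filter_ne' Finset.univ j,
      Finset.sum_erase_eq_sub (Finset.mem_univ j), sum_proj_eq_one uh hONh]
  rw [h1, h2]
end
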